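/- Let p be a prime and a₁, …, a_k natural numbers. Then p does not divide the multinomial coefficient ch(a₁,…,a_k) if and only if for every m ≥ 0, the sum over i of the m-th base-p digit of aᵢ (that is, Σᵢ ((aᵢ / p^m) mod p)) is less than p, i.e., if and only if the sum a₁ + ⋯ + a_k can be computed in base p without carrying. -/

import Mathlib

open Finset

private lemma padicValNat_prod' (p : ℕ) [Fact p.Prime] {ι : Type*} (s : Finset ι) (f : ι → ℕ)
    (h : ∀ i ∈ s, f i ≠ 0) :
    padicValNat p (∏ i ∈ s, f i) = ∑ i ∈ s, padicValNat p (f i) := by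
  classical
  induction s using Finset.induction with
  | empty => simp
  | @insert x s hx ih =>
    rw [Finset.prod_insert hx, Finset.sum_insert hx,
      padicValNat.mul (h x (Finset.mem_insert_self _ _))
        (Finset.prod_ne_zero_iff.2 fun i hi => h i (Finset.mem_insert_of_mem hi)),
      ih fun i hi => h i (Finset.mem_insert_of_mem hi)]

private lemma div_pow_decomp (p m a : ℕ) :
    a / p ^ m = p * (a / p ^ (m + 1)) + a / p ^ m % p := by
  rw [pow_succ, ← Nat.div_div_eq_div_mul]
  exact (Nat.div_add_mod _ p).symm

private lemma sum_div_le {k : ℕ} (a : Fin k → ℕ) (n : ℕ) (hn : 0 < n) :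
    ∑ i, a i / n ≤ (∑ i, a i) / n := by
  rw [Nat.le_div_iff_mul_le hn, Finset.sum_mul]
  exact Finset.sum_le_sum fun i _ => Nat.div_mul_le_self _ _

private lemma mod_pow_decomp (p m a : ℕ) :
    a % p ^ (m + 1) = a % p ^ m + p ^ m * (a / p ^ m % p) := by
  have h1 : p ^ m * (a / p ^ m) + a % p ^ m = a := Nat.div_add_mod a (p ^ m)
  have h2 : p * (a / p ^ m / p) + a / p ^ m % p = a / p ^ m := Nat.div_add_mod _ p
  have h3 : p ^ m * (a / p ^ m) = p ^ m * p * (a / p ^ m / p) + p ^ m * (a / p ^ m % p) := by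
    conv_lhs => rw [← h2]
    ring
  have h4 : p ^ (m + 1) * (a / p ^ (m + 1)) + a % p ^ (m + 1) = a := Nat.div_add_mod _ _
  have h5 : a / p ^ (m + 1) = a / p ^ m / p := by rw [pow_succ, Nat.div_div_eq_div_mul]
  rw [h5, pow_succ] at h4
  rw [pow_succ]
  omega

private lemma bridge {p k : ℕ} (hp : 2 ≤ p) (a : Fin k → ℕ) :
    (∀ m : ℕ, ∑ i, a i / p ^ m = (∑ i, a i) / p ^ m) ↔
      (∀ m : ℕ, (∑ i, a i / p ^ m % p) < p) := by
  have hp0 : 0 < p := by omega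
  set N := ∑ i, a i with hN
  constructor
  · intro C m
    have h1 : ∑ i, a i / p ^ m = p * (∑ i, a i / p ^ (m + 1)) + ∑ i, a i / p ^ m % p := by
      rw [Finset.mul_sum, ← Finset.sum_add_distrib]
      exact Finset.sum_congr rfl fun i _ => div_pow_decomp p m (a i)
    rw [C m, C (m + 1)] at h1
    have h2 : N / p ^ m = p * (N / p ^ (m + 1)) + N / p ^ m % p :=
      div_pow_decomp p m N
    have : ∑ i, a i / p ^ m % p = N / p ^ m % p := by omega
    rw [this]
    exact Nat.mod_lt _ hp0
  · intro D
    have E : ∀ m : ℕ, ∑ i, a i % p ^ m = N % p ^ m := by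
      intro m
      induction m with
      | zero => simp [Nat.mod_one]
      | succ m ih =>
        have h1 : ∑ i, a i % p ^ (m + 1) = N % p ^ m + p ^ m * ∑ i, a i / p ^ m % p := by
          rw [← ih, Finset.mul_sum, ← Finset.sum_add_distrib]
          exact Finset.sum_congr rfl fun i _ => mod_pow_decomp p m (a i)
        have hlt : N % p ^ m + p ^ m * ∑ i, a i / p ^ m % p < p ^ (m + 1) := by
          have h2 : N % p ^ m < p ^ m := Nat.mod_lt _ (pow_pos hp0 m)
          have h3 : ∑ i, a i / p ^ m % p + 1 ≤ p := D m
          calc N % p ^ m + p ^ m * ∑ i, a i / p ^ m % p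
              < p ^ m * (∑ i, a i / p ^ m % p + 1) := by rw [Nat.mul_succ]; omega
            _ ≤ p ^ m * p := Nat.mul_le_mul_left _ h3
            _ = p ^ (m + 1) := (pow_succ p m).symm
        have hcong : (∑ i, a i % p ^ (m + 1)) % p ^ (m + 1) = N % p ^ (m + 1) := by
          have h : (∑ i, a i % p ^ (m + 1)) % p ^ (m + 1) = (∑ i, a i) % p ^ (m + 1) :=
            (Finset.sum_nat_mod _ _ _).symm
          rw [h]
        rw [h1] at hcong ⊢
        rw [← hcong, Nat.mod_eq_of_lt hlt]
    intro m
    have e1 : p ^ m * (∑ i, a i / p ^ m) + ∑ i, a i % p ^ m = N := by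
      rw [Finset.mul_sum, ← Finset.sum_add_distrib]
      exact Finset.sum_congr rfl fun i _ => Nat.div_add_mod _ _
    have e2 : p ^ m * (N / p ^ m) + N % p ^ m = N := Nat.div_add_mod _ _
    have e3 := E m
    have hpm : 0 < p ^ m := pow_pos hp0 m
    have h : p ^ m * (∑ i, a i / p ^ m) = p ^ m * (N / p ^ m) := by omega
    exact Nat.eq_of_mul_eq_mul_left hpm h

theorem stmt_6 (p : ℕ) (hp : p.Prime) (k : ℕ) (a : Fin k → ℕ) :
    ¬ p ∣ Nat.multinomial Finset.univ a ↔ ∀ m : ℕ, (∑ i, a i / p ^ m % p) < p := by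
  haveI : Fact p.Prime := ⟨hp⟩
  set N := ∑ i, a i with hN
  have hmpos : 0 < Nat.multinomial Finset.univ a := Nat.multinomial_pos _ _
  set b := Nat.log p N + 1 with hb
  have hlog : Nat.log p N < b := Nat.lt_succ_self _
  have hspec : (∏ i, Nat.factorial (a i)) * Nat.multinomial Finset.univ a = Nat.factorial N :=
    Nat.multinomial_spec _ _
  have hval : (∑ i, padicValNat p (Nat.factorial (a i)))
      + padicValNat p (Nat.multinomial Finset.univ a)
      = padicValNat p (Nat.factorial N) := by
    rw [← padicValNat_prod' p Finset.univ (fun i => Nat.factorial (a i))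
        (fun i _ => Nat.factorial_ne_zero _),
      ← padicValNat.mul (Finset.prod_ne_zero_iff.2 fun i _ => Nat.factorial_ne_zero _)
        hmpos.ne', hspec]
  have haN : ∀ i : Fin k, a i ≤ N := fun i =>
    Finset.single_le_sum (fun j _ => Nat.zero_le (a j)) (Finset.mem_univ i)
  have hvalN : padicValNat p (Nat.factorial N) = ∑ m ∈ Finset.Ico 1 b, N / p ^ m :=
    padicValNat_factorial hlog
  have hvala : ∀ i : Fin k,
      padicValNat p (Nat.factorial (a i)) = ∑ m ∈ Finset.Ico 1 b, a i / p ^ m :=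
    fun i => padicValNat_factorial (lt_of_le_of_lt (Nat.log_mono_right (haN i)) hlog)
  have hp0 : 0 < p := hp.pos
  have hiff : ¬ p ∣ Nat.multinomial Finset.univ a ↔
      padicValNat p (Nat.multinomial Finset.univ a) = 0 := by
    rw [padicValNat.eq_zero_iff]
    simp [hp.ne_one, hmpos.ne']
  have key : ¬ p ∣ Nat.multinomial Finset.univ a ↔
      ∀ m : ℕ, ∑ i, a i / p ^ m = N / p ^ m := by
    rw [hiff]
    have h0 : padicValNat p (Nat.multinomial Finset.univ a) = 0 ↔
        (∑ i, padicValNat p (Nat.factorial (a i))) = padicValNat p (Nat.factorial N) := by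
      omega
    rw [h0]
    simp only [hvala, hvalN]
    rw [Finset.sum_comm]
    constructor
    · intro h m
      have hle : ∀ m ∈ Finset.Ico 1 b, ∑ i, a i / p ^ m ≤ N / p ^ m :=
        fun m _ => sum_div_le a (p ^ m) (pow_pos hp0 m)
      have hterm := (Finset.sum_eq_sum_iff_of_le hle).1 h
      rcases Nat.lt_or_ge m b with hmb | hmb
      · rcases Nat.eq_zero_or_pos m with rfl | hm0
        · simp [hN]
        · exact hterm m (Finset.mem_Ico.2 ⟨hm0, hmb⟩)
      · have hNlt : N < p ^ m := lt_of_lt_of_le (Nat.lt_pow_succ_log_self hp.one_lt N)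
          (Nat.pow_le_pow_right hp0 hmb)
        have hz : ∀ i : Fin k, a i / p ^ m = 0 := fun i =>
          Nat.div_eq_of_lt (lt_of_le_of_lt (haN i) hNlt)
        simp [hz, Nat.div_eq_of_lt hNlt]
    · intro h
      exact Finset.sum_congr rfl fun m _ => h m
  rw [key]
  exact bridge hp.two_le a
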